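/- Let μ be a locally finite Borel measure on ℝⁿ and 0 ≤ α < n. Then there exists a dimensional constant C such that for all f ∈ L¹_loc(ℝⁿ), ∫_{ℝⁿ} M_α f dμ ≤ C ∫_{ℝⁿ} Mf(x) · M_α μ(x) dx, where M_α f(x) = sup_{Q ∋ x} ℓ(Q)^α ⨍_Q |f| dy is the fractional maximal function over cubes, and M = M₀ is the Hardy–Littlewood maximal function. -/

import Mathlib

open MeasureTheory
open scoped ENNReal

/-- An axis-parallel (half-open) cube with corner `c` and side length `l`. -/
def cubeOf (n : ℕ) (c : Fin n → ℝ) (l : ℝ) : Set (EuclideanSpace ℝ (Fin n)) :=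
  {y | ∀ i, c i ≤ y i ∧ y i < c i + l}

/-- The fractional maximal function of `f` over cubes:
`M_α f(x) = sup_{Q ∋ x} ℓ(Q)^α ⨍_Q |f|`. -/
noncomputable def cubeFracMaxFn (n : ℕ) (α : ℝ) (f : EuclideanSpace ℝ (Fin n) → ℝ)
    (x : EuclideanSpace ℝ (Fin n)) : ℝ≥0∞ :=
  ⨆ (c : Fin n → ℝ) (l : ℝ) (_ : 0 < l) (_ : x ∈ cubeOf n c l),
    ENNReal.ofReal (l ^ α) * (∫⁻ y in cubeOf n c l, (‖f y‖₊ : ℝ≥0∞))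
      / volume (cubeOf n c l)

/-- The fractional maximal function of a measure over cubes:
`M_α μ(x) = sup_{Q ∋ x} ℓ(Q)^α μ(Q)/ℒ(Q)`. -/
noncomputable def cubeFracMaxMeas (n : ℕ) (α : ℝ)
    (μ : Measure (EuclideanSpace ℝ (Fin n))) (x : EuclideanSpace ℝ (Fin n)) : ℝ≥0∞ :=
  ⨆ (c : Fin n → ℝ) (l : ℝ) (_ : 0 < l) (_ : x ∈ cubeOf n c l),
    ENNReal.ofReal (l ^ α) * μ (cubeOf n c l) / volume (cubeOf n c l)

namespace FracMaxAux
open scoped Classical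

abbrev Pt (n : ℕ) := EuclideanSpace ℝ (Fin n)

/-! ### Floor helpers -/

lemma floor_div_nat (v : ℝ) (N : ℕ) (hN : 0 < N) : ⌊v / (N : ℝ)⌋ = ⌊v⌋ / (N : ℤ) := by
  have hN' : (0:ℝ) < (N:ℝ) := by exact_mod_cast hN
  have hq := Int.mul_ediv_add_emod ⌊v⌋ (N : ℤ)
  set q := ⌊v⌋ / (N : ℤ) with hqdef
  set r := ⌊v⌋ % (N : ℤ) with hrdef
  have hr0 : 0 ≤ r := Int.emod_nonneg _ (by exact_mod_cast hN.ne')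
  have hrN : r < N := Int.emod_lt_of_pos _ (by exact_mod_cast hN)
  have hfv : ((N:ℝ) * (q:ℝ) + (r:ℝ)) = (⌊v⌋ : ℝ) := by exact_mod_cast hq
  have h1 : (⌊v⌋ : ℝ) ≤ v := Int.floor_le v
  have h2 : v < (⌊v⌋ : ℝ) + 1 := Int.lt_floor_add_one v
  have hr0' : (0:ℝ) ≤ (r:ℝ) := by exact_mod_cast hr0
  have hrN' : (r:ℝ) + 1 ≤ (N:ℝ) := by exact_mod_cast hrN
  rw [Int.floor_eq_iff]
  constructor
  · rw [le_div_iff₀ hN']; nlinarith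
  · rw [div_lt_iff₀ hN']; push_cast; nlinarith

lemma floor_interval {s l y : ℝ} (hl : 0 < l) (m : ℤ)
    (h1 : l * m + s ≤ y) (h2 : y < l * m + s + l) : ⌊(y - s) / l⌋ = m := by
  rw [Int.floor_eq_iff]
  constructor
  · rw [le_div_iff₀ hl]; nlinarith
  · rw [div_lt_iff₀ hl]; push_cast; nlinarith

/-! ### Shifted dyadic grids -/

noncomputable def sh (b : Bool) (k : ℤ) : ℝ := if b then (-1:ℝ)^k * 2^k / 3 else 0

noncomputable def mIdx {n : ℕ} (t : Fin n → Bool) (k : ℤ) (x : Pt n) : Fin n → ℤ :=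
  fun i => ⌊(x i - sh (t i) k) / 2^k⌋

def Dc {n : ℕ} (t : Fin n → Bool) (k : ℤ) (m : Fin n → ℤ) : Set (Pt n) :=
  {y | mIdx t k y = m}

lemma two_zpow_pos (k : ℤ) : (0:ℝ) < 2^k := zpow_pos (by norm_num) k

lemma mem_Dc {n : ℕ} {t : Fin n → Bool} {k : ℤ} {m : Fin n → ℤ} {y : Pt n} :
    y ∈ Dc t k m ↔ ∀ i, ⌊(y i - sh (t i) k) / 2^k⌋ = m i := by
  simp [Dc, mIdx, funext_iff]

lemma self_mem_Dc {n : ℕ} (t : Fin n → Bool) (k : ℤ) (x : Pt n) :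
    x ∈ Dc t k (mIdx t k x) := by simp [Dc]

lemma Dc_eq_cubeOf {n : ℕ} (t : Fin n → Bool) (k : ℤ) (m : Fin n → ℤ) :
    Dc t k m = cubeOf n (fun i => 2^k * m i + sh (t i) k) ((2:ℝ)^k) := by
  ext y
  rw [mem_Dc]
  simp only [cubeOf, Set.mem_setOf_eq]
  constructor
  · intro h i
    have := h i
    rw [Int.floor_eq_iff, le_div_iff₀ (two_zpow_pos k), div_lt_iff₀ (two_zpow_pos k)] at this
    push_cast at this
    constructor <;> nlinarith [this.1, this.2]
  · intro h i
    exact floor_interval (two_zpow_pos k) (m i) (by nlinarith [(h i).1]) (by nlinarith [(h i).2])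

lemma sh_diff (b : Bool) {k k' : ℤ} (h : k ≤ k') : ∃ z : ℤ, sh b k' - sh b k = 2^k * z := by
  cases b
  · exact ⟨0, by simp [sh]⟩
  · set d := (k' - k).toNat with hd
    have hk' : k' = k + (d : ℤ) := by
      rw [hd, Int.toNat_of_nonneg (by omega)]; ring
    have hdvd : (3:ℤ) ∣ ((-1)^d * 2^d - 1) := by
      have h1 : ((-2 : ℤ))^d ≡ 1^d [ZMOD 3] := Int.ModEq.pow d (by decide)
      have h2 : ((-2:ℤ))^d = (-1)^d * 2^d := by rw [← neg_one_mul, mul_pow]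
      have := h1.symm.dvd
      rw [h2, one_pow] at this
      exact this
    obtain ⟨z, hz⟩ := hdvd
    have hz' : ((-1:ℝ))^d * 2^d - 1 = 3 * (z:ℝ) := by exact_mod_cast hz
    have e1 : ((-1:ℝ))^k' = (-1)^k * (-1)^d := by
      rw [hk', zpow_add₀ (by norm_num : (-1:ℝ) ≠ 0), zpow_natCast]
    have e2 : (2:ℝ)^k' = 2^k * 2^d := by
      rw [hk', zpow_add₀ (by norm_num : (2:ℝ) ≠ 0), zpow_natCast]
    rcases Int.even_or_odd k with he | ho
    · refine ⟨z, ?_⟩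
      simp only [sh, if_true]
      rw [e1, e2, he.neg_one_zpow]
      push_cast
      linear_combination ((2:ℝ)^k / 3) * hz'
    · refine ⟨-z, ?_⟩
      simp only [sh, if_true]
      rw [e1, e2, ho.neg_one_zpow]
      push_cast
      linear_combination (-(2:ℝ)^k / 3) * hz'

lemma mIdx_nest {n : ℕ} (t : Fin n → Bool) {k k' : ℤ} (h : k ≤ k') {x y : Pt n}
    (hxy : mIdx t k x = mIdx t k y) : mIdx t k' x = mIdx t k' y := by
  funext i
  obtain ⟨z, hz⟩ := sh_diff (t i) h
  set d := (k' - k).toNat with hd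
  have hk' : k' = k + (d : ℤ) := by rw [hd, Int.toNat_of_nonneg (by omega)]; ring
  have e2 : (2:ℝ)^k' = 2^k * 2^d := by
    rw [hk', zpow_add₀ (by norm_num : (2:ℝ) ≠ 0), zpow_natCast]
  have key : ∀ v : ℝ, ⌊(v - sh (t i) k') / 2^k'⌋ = (⌊(v - sh (t i) k) / 2^k⌋ - z) / (2^d : ℤ) := by
    intro v
    have h2d : (0:ℝ) < (2:ℝ)^d := by positivity
    have hrw : (v - sh (t i) k') / 2^k' = ((v - sh (t i) k) / 2^k - z) / ((2^d : ℕ) : ℝ) := by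
      push_cast
      rw [e2]
      have hs : sh (t i) k' = sh (t i) k + 2^k * z := by linarith [hz]
      rw [hs]
      field_simp
      ring
    rw [hrw, floor_div_nat _ _ (by positivity), Int.floor_sub_intCast]
    push_cast
    rfl
  have hx := key (x i)
  have hy := key (y i)
  have hc := congrFun hxy i
  simp only [mIdx] at hc ⊢
  rw [hx, hy, hc]

lemma oneThird_1d {a l : ℝ} (hl : 0 < l) {k : ℤ} (h3 : 3 * l ≤ 2^k) :
    ∃ b : Bool, ∀ y : ℝ, a ≤ y → y < a + l →
      ⌊(y - sh b k) / 2^k⌋ = ⌊(a - sh b k) / 2^k⌋ := by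
  have h2k : (0:ℝ) < 2^k := two_zpow_pos k
  by_contra hcon
  push_neg at hcon
  have fail : ∀ b : Bool, 2^k * (⌊(a - sh b k) / 2^k⌋ + 1) + sh b k < a + l := by
    intro b
    by_contra hb
    push_neg at hb
    obtain ⟨y, hy1, hy2, hy3⟩ := hcon b
    apply hy3
    set m := ⌊(a - sh b k) / 2^k⌋ with hm
    have hfa : 2^k * m + sh b k ≤ a := by
      have := Int.floor_le ((a - sh b k) / 2^k)
      rw [← hm] at this
      rw [le_div_iff₀ h2k] at this
      linarith
    refine floor_interval h2k m (by linarith) ?_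
    push_cast at hb ⊢
    linarith
  have key : ∀ b : Bool, 2^k * (⌊(a - sh b k) / 2^k⌋ + 1) + sh b k ∈ Set.Ioo a (a + l) := by
    intro b
    refine ⟨?_, fail b⟩
    have := Int.lt_floor_add_one ((a - sh b k) / 2^k)
    rw [div_lt_iff₀ h2k] at this
    push_cast
    linarith
  obtain ⟨hp0, hp0'⟩ := key false
  obtain ⟨hp1, hp1'⟩ := key true
  set m0 := ⌊(a - sh false k) / 2^k⌋
  set m1 := ⌊(a - sh true k) / 2^k⌋
  have hs0 : sh false k = 0 := rfl
  have hs1 : sh true k = (-1:ℝ)^k * 2^k / 3 := rfl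
  -- the two "next grid points" are within distance < l of each other, but grids are 2^k/3 apart
  have hd1 : |(2^k * (m0+1) + sh false k) - (2^k * (m1+1) + sh true k)| < l := by
    rw [abs_lt]; constructor <;> push_cast <;> nlinarith
  have hd2 : (2:ℝ)^k / 3 ≤ |(2^k * (m0+1) + sh false k) - (2^k * (m1+1) + sh true k)| := by
    rw [hs0, hs1]
    rcases Int.even_or_odd k with he | ho
    · rw [he.neg_one_zpow]
      have : (1:ℝ) ≤ |3 * ((m0:ℝ) - m1) - 1| := by
        have : (1:ℤ) ≤ |3 * (m0 - m1) - 1| := Int.one_le_abs (by omega)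
        exact_mod_cast this
      calc (2:ℝ)^k / 3 = 2^k * 1 / 3 := by ring
      _ ≤ 2^k * |3 * ((m0:ℝ) - m1) - 1| / 3 := by
          gcongr
      _ = |2^k * (3 * ((m0:ℝ) - m1) - 1) / 3| := by
          rw [abs_div, abs_mul, abs_of_pos h2k]; norm_num
      _ = _ := by congr 1; push_cast; ring
    · rw [ho.neg_one_zpow]
      have : (1:ℝ) ≤ |3 * ((m0:ℝ) - m1) + 1| := by
        have : (1:ℤ) ≤ |3 * (m0 - m1) + 1| := Int.one_le_abs (by omega)
        exact_mod_cast this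
      calc (2:ℝ)^k / 3 = 2^k * 1 / 3 := by ring
      _ ≤ 2^k * |3 * ((m0:ℝ) - m1) + 1| / 3 := by gcongr
      _ = |2^k * (3 * ((m0:ℝ) - m1) + 1) / 3| := by
          rw [abs_div, abs_mul, abs_of_pos h2k]; norm_num
      _ = _ := by congr 1; push_cast; ring
  linarith [hd1, hd2, h3]

lemma cover {n : ℕ} {c : Fin n → ℝ} {l : ℝ} (hl : 0 < l) {x : Pt n} (hx : x ∈ cubeOf n c l) :
    ∃ (t : Fin n → Bool) (k : ℤ), 3*l ≤ 2^k ∧ (2:ℝ)^k ≤ 6*l ∧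
      cubeOf n c l ⊆ Dc t k (mIdx t k x) := by
  obtain ⟨k₀, hk₀⟩ := exists_mem_Ico_zpow (show (0:ℝ) < 3*l by linarith) (by norm_num : (1:ℝ) < 2)
  refine ⟨?_, k₀ + 1, hk₀.2.le, ?_, ?_⟩
  · exact fun i => (oneThird_1d (a := c i) hl (hk₀.2.le : 3*l ≤ 2^(k₀+1))).choose
  · have : (2:ℝ)^(k₀+1) = 2 * 2^k₀ := by
      rw [zpow_add₀ (by norm_num : (2:ℝ) ≠ 0)]; ring
    rw [this]; nlinarith [hk₀.1]
  · intro y hy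
    rw [mem_Dc]
    intro i
    have hspec := (oneThird_1d (a := c i) hl (hk₀.2.le : 3*l ≤ 2^(k₀+1))).choose_spec
    have h1 := hspec (y i) (hy i).1 (hy i).2
    have h2 := hspec (x i) (hx i).1 (hx i).2
    simp only [mIdx]
    rw [h1, h2]

/-! ### Cube measure basics -/

lemma measurable_coord {n : ℕ} (i : Fin n) : Measurable fun y : Pt n => y i :=
  (measurable_pi_apply i).comp (MeasurableEquiv.toLp 2 (Fin n → ℝ)).symm.measurable

lemma cubeOf_eq_pi {n : ℕ} (c : Fin n → ℝ) (l : ℝ) :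
    cubeOf n c l = ⋂ i, (fun y : Pt n => y i) ⁻¹' (Set.Ico (c i) (c i + l)) := by
  ext y; simp [cubeOf, Set.mem_Ico]

lemma measurableSet_cubeOf {n : ℕ} (c : Fin n → ℝ) (l : ℝ) :
    MeasurableSet (cubeOf n c l) := by
  rw [cubeOf_eq_pi]
  exact MeasurableSet.iInter fun i => (measurable_coord i) measurableSet_Ico

lemma volume_cubeOf {n : ℕ} (c : Fin n → ℝ) {l : ℝ} (hl : 0 ≤ l) :
    volume (cubeOf n c l) = ENNReal.ofReal l ^ n := by
  have hpre : cubeOf n c l =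
      ((MeasurableEquiv.toLp 2 (Fin n → ℝ)).symm) ⁻¹' (Set.univ.pi fun i => Set.Ico (c i) (c i + l)) := by
    ext y
    simp [cubeOf, Set.mem_pi, Set.mem_Ico]
  rw [hpre, (EuclideanSpace.volume_preserving_symm_measurableEquiv_toLp (Fin n)).measure_preimage
      ((MeasurableSet.univ_pi fun i => measurableSet_Ico).nullMeasurableSet)]
  rw [volume_pi_pi]
  simp [Real.volume_Ico]

lemma volume_cubeOf_ne_zero {n : ℕ} (c : Fin n → ℝ) {l : ℝ} (hl : 0 < l) :
    volume (cubeOf n c l) ≠ 0 := by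
  rw [volume_cubeOf c hl.le]
  exact pow_ne_zero _ (by simp [hl])

lemma volume_cubeOf_ne_top {n : ℕ} (c : Fin n → ℝ) {l : ℝ} (hl : 0 ≤ l) :
    volume (cubeOf n c l) ≠ ⊤ := by
  rw [volume_cubeOf c hl]
  exact ENNReal.pow_ne_top ENNReal.ofReal_ne_top

lemma cubeOf_subset_closedBall {n : ℕ} (c : Fin n → ℝ) {l : ℝ} (hl : 0 < l) :
    cubeOf n c l ⊆ Metric.closedBall (show Pt n from WithLp.toLp 2 c) (Real.sqrt (n * l^2)) := by
  intro y hy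
  rw [Metric.mem_closedBall, EuclideanSpace.dist_eq]
  apply Real.sqrt_le_sqrt
  calc ∑ i, dist (y i) (c i) ^ 2 ≤ ∑ _i : Fin n, l^2 := by
        apply Finset.sum_le_sum
        intro i _
        have h1 := (hy i).1
        have h2 := (hy i).2
        have : dist (y i) (c i) ≤ l := by
          rw [Real.dist_eq, abs_le]; constructor <;> nlinarith
        nlinarith [dist_nonneg (x := y i) (y := c i)]
  _ = n * l^2 := by simp [Finset.sum_const, Finset.card_univ]

lemma measure_cubeOf_lt_top {n : ℕ} {μ : Measure (Pt n)} [IsLocallyFiniteMeasure μ]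
    (c : Fin n → ℝ) {l : ℝ} (hl : 0 < l) : μ (cubeOf n c l) < ⊤ :=
  lt_of_le_of_lt (measure_mono (cubeOf_subset_closedBall c hl))
    (IsCompact.measure_lt_top (isCompact_closedBall _ _))

lemma lintegral_cubeOf_lt_top {n : ℕ} {f : Pt n → ℝ} (hf : LocallyIntegrable f volume)
    (c : Fin n → ℝ) {l : ℝ} (hl : 0 < l) :
    ∫⁻ y in cubeOf n c l, (‖f y‖₊ : ℝ≥0∞) < ⊤ := by
  have hint : IntegrableOn f (cubeOf n c l) volume := by
    apply IntegrableOn.mono_set _ (cubeOf_subset_closedBall c hl)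
    exact hf.integrableOn_isCompact (isCompact_closedBall _ _)
  exact hint.2

/-! ### Dyadic maximal machinery -/

noncomputable def aQ {n : ℕ} (α : ℝ) (f : Pt n → ℝ) (t : Fin n → Bool) (k : ℤ)
    (m : Fin n → ℤ) : ℝ≥0∞ :=
  ENNReal.ofReal (((2:ℝ)^k) ^ α) * (∫⁻ y in Dc t k m, (‖f y‖₊ : ℝ≥0∞)) / volume (Dc t k m)

noncomputable def Af {n : ℕ} (α : ℝ) (f : Pt n → ℝ) (t : Fin n → Bool) (k : ℤ) (x : Pt n) :
    ℝ≥0∞ := aQ α f t k (mIdx t k x)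

noncomputable def MKf {n : ℕ} (α : ℝ) (f : Pt n → ℝ) (t : Fin n → Bool) (K : ℤ) (x : Pt n) :
    ℝ≥0∞ := ⨆ (k : ℤ) (_ : k ≤ K), Af α f t k x

noncomputable def wj (j : ℤ) : ℝ≥0∞ := ENNReal.ofReal ((2:ℝ)^j)

noncomputable def corner {n : ℕ} (t : Fin n → Bool) (k : ℤ) (m : Fin n → ℤ) : Pt n :=
  WithLp.toLp 2 (fun i => 2^k * m i + sh (t i) k)

def Om {n : ℕ} (α : ℝ) (f : Pt n → ℝ) (t : Fin n → Bool) (K j : ℤ) : Set (Pt n) :=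
  {x | wj j < MKf α f t K x}

/-- maximal stopping cubes at level `j` -/
def PP {n : ℕ} (α : ℝ) (f : Pt n → ℝ) (t : Fin n → Bool) (K j : ℤ) (k : ℤ)
    (m : Fin n → ℤ) : Prop :=
  k ≤ K ∧ wj j < aQ α f t k m ∧
    ∀ k', k < k' → k' ≤ K → aQ α f t k' (mIdx t k' (corner t k m)) ≤ wj j

def Ej {n : ℕ} (α : ℝ) (f : Pt n → ℝ) (t : Fin n → Bool) (K j : ℤ) (k : ℤ)
    (m : Fin n → ℤ) : Set (Pt n) :=
  Dc t k m \ Om α f t K (j + (n+2))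

lemma volume_Dc {n : ℕ} (t : Fin n → Bool) (k : ℤ) (m : Fin n → ℤ) :
    volume (Dc t k m) = ENNReal.ofReal ((2:ℝ)^k) ^ n := by
  rw [Dc_eq_cubeOf, volume_cubeOf _ (two_zpow_pos k).le]

lemma volume_Dc_ne_zero {n : ℕ} (t : Fin n → Bool) (k : ℤ) (m : Fin n → ℤ) :
    volume (Dc t k m) ≠ 0 := by
  rw [Dc_eq_cubeOf]; exact volume_cubeOf_ne_zero _ (two_zpow_pos k)

lemma volume_Dc_ne_top {n : ℕ} (t : Fin n → Bool) (k : ℤ) (m : Fin n → ℤ) :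
    volume (Dc t k m) ≠ ⊤ := by
  rw [Dc_eq_cubeOf]; exact volume_cubeOf_ne_top _ (two_zpow_pos k).le

lemma measurableSet_Dc {n : ℕ} (t : Fin n → Bool) (k : ℤ) (m : Fin n → ℤ) :
    MeasurableSet (Dc t k m) := by
  rw [Dc_eq_cubeOf]; exact measurableSet_cubeOf _ _

lemma corner_mem_Dc {n : ℕ} (t : Fin n → Bool) (k : ℤ) (m : Fin n → ℤ) :
    corner t k m ∈ Dc t k m := by
  rw [mem_Dc]
  intro i
  have : (corner t k m) i = 2^k * m i + sh (t i) k := rfl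
  rw [this]
  have h2 : ((2:ℝ)^k * m i + sh (t i) k - sh (t i) k) / 2^k = (m i : ℝ) := by
    field_simp
    ring
  rw [h2, Int.floor_intCast]

lemma Dc_unique {n : ℕ} {t : Fin n → Bool} {k : ℤ} {m m' : Fin n → ℤ} {y : Pt n}
    (h : y ∈ Dc t k m) (h' : y ∈ Dc t k m') : m = m' := by
  rw [Dc, Set.mem_setOf_eq] at h h'; rw [← h, h']

lemma Dc_nest {n : ℕ} {t : Fin n → Bool} {k k' : ℤ} (hkk : k ≤ k') {m : Fin n → ℤ}
    {x : Pt n} (hx : x ∈ Dc t k m) : Dc t k m ⊆ Dc t k' (mIdx t k' x) := by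
  intro y hy
  rw [Dc, Set.mem_setOf_eq] at hx hy ⊢
  exact mIdx_nest t hkk (by rw [hy, hx])

lemma Af_le_MKf {n : ℕ} (α : ℝ) (f : Pt n → ℝ) (t : Fin n → Bool) {K k : ℤ} (hk : k ≤ K)
    (x : Pt n) : Af α f t k x ≤ MKf α f t K x := by
  refine le_trans ?_ (le_iSup _ k)
  simp [hk]

lemma aQ_le_MKf {n : ℕ} (α : ℝ) (f : Pt n → ℝ) (t : Fin n → Bool) {K k : ℤ} (hk : k ≤ K)
    {m : Fin n → ℤ} {y : Pt n} (hy : y ∈ Dc t k m) : aQ α f t k m ≤ MKf α f t K y := by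
  have : m = mIdx t k y := (Dc_unique (self_mem_Dc t k y) hy).symm
  rw [this]
  exact Af_le_MKf α f t hk y

lemma wj_ne_zero (j : ℤ) : wj j ≠ 0 := by
  simp only [wj, ne_eq, ENNReal.ofReal_eq_zero, not_le]
  exact two_zpow_pos j

lemma wj_ne_top (j : ℤ) : wj j ≠ ⊤ := ENNReal.ofReal_ne_top

lemma wj_mono {j j' : ℤ} (h : j ≤ j') : wj j ≤ wj j' := by
  apply ENNReal.ofReal_le_ofReal
  exact zpow_le_zpow_right₀ (by norm_num) h

lemma Om_anti {n : ℕ} (α : ℝ) (f : Pt n → ℝ) (t : Fin n → Bool) (K : ℤ) {j j' : ℤ}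
    (h : j ≤ j') : Om α f t K j' ⊆ Om α f t K j :=
  fun x hx => lt_of_le_of_lt (wj_mono h) hx

/-! ### Measurability -/

lemma Af_eq_iSup {n : ℕ} (α : ℝ) (f : Pt n → ℝ) (t : Fin n → Bool) (k : ℤ) (x : Pt n) :
    Af α f t k x = ⨆ m : Fin n → ℤ, (Dc t k m).indicator (fun _ => aQ α f t k m) x := by
  apply le_antisymm
  · refine le_trans ?_ (le_iSup _ (mIdx t k x))
    rw [Set.indicator_of_mem (self_mem_Dc t k x)]
    rfl
  · refine iSup_le fun m => ?_
    by_cases hm : x ∈ Dc t k m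
    · rw [Set.indicator_of_mem hm, Af, Dc_unique (self_mem_Dc t k x) hm]
    · rw [Set.indicator_of_notMem hm]; exact zero_le

lemma measurable_Af {n : ℕ} (α : ℝ) (f : Pt n → ℝ) (t : Fin n → Bool) (k : ℤ) :
    Measurable (Af α f t k) := by
  have : Af α f t k = fun x => ⨆ m : Fin n → ℤ, (Dc t k m).indicator (fun _ => aQ α f t k m) x :=
    funext fun x => Af_eq_iSup α f t k x
  rw [this]
  exact Measurable.iSup fun m => Measurable.indicator measurable_const (measurableSet_Dc t k m)

lemma measurable_MKf {n : ℕ} (α : ℝ) (f : Pt n → ℝ) (t : Fin n → Bool) (K : ℤ) :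
    Measurable (MKf α f t K) :=
  Measurable.iSup fun k => Measurable.iSup fun _ => measurable_Af α f t k

lemma measurableSet_Om {n : ℕ} (α : ℝ) (f : Pt n → ℝ) (t : Fin n → Bool) (K j : ℤ) :
    MeasurableSet (Om α f t K j) :=
  measurableSet_lt measurable_const (measurable_MKf α f t K)

lemma measurableSet_Ej {n : ℕ} (α : ℝ) (f : Pt n → ℝ) (t : Fin n → Bool) (K j k : ℤ)
    (m : Fin n → ℤ) : MeasurableSet (Ej α f t K j k m) :=
  (measurableSet_Dc t k m).diff (measurableSet_Om α f t K _)

/-! ### Geometric sums of weights -/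

lemma tsum_wj_cut (J : ℤ) : (∑' j : ℤ, if j ≤ J then wj j else 0) = 2 * wj J := by
  have hinj : Function.Injective (fun i : ℕ => J - (i : ℤ)) := by
    intro i i' h; simpa using h
  have hsupp : Function.support (fun j : ℤ => if j ≤ J then wj j else 0) ⊆
      Set.range (fun i : ℕ => J - (i : ℤ)) := by
    intro j hj
    rcases le_or_gt j J with h | h
    · exact ⟨(J - j).toNat, by simp [Int.toNat_of_nonneg (by omega : (0:ℤ) ≤ J - j)]⟩
    · simp [not_le.mpr h] at hj
  rw [← hinj.tsum_eq hsupp]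
  have hterm : ∀ i : ℕ, (if J - (i:ℤ) ≤ J then wj (J - i) else 0) = wj J * (2⁻¹ : ℝ≥0∞)^i := by
    intro i
    rw [if_pos (by omega)]
    have : (2:ℝ)^(J - (i:ℤ)) = 2^J * ((2:ℝ)⁻¹)^i := by
      rw [zpow_sub₀ (by norm_num : (2:ℝ) ≠ 0), zpow_natCast, inv_pow]
      ring
    rw [wj, this, ENNReal.ofReal_mul (by positivity), ENNReal.ofReal_pow (by norm_num)]
    rw [show ENNReal.ofReal 2⁻¹ = (2:ℝ≥0∞)⁻¹ by
      rw [ENNReal.ofReal_inv_of_pos (by norm_num), ENNReal.ofReal_ofNat]]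
    rfl
  calc (∑' i : ℕ, if J - (i:ℤ) ≤ J then wj (J - i) else 0)
      = ∑' i : ℕ, wj J * (2⁻¹ : ℝ≥0∞)^i := by exact tsum_congr hterm
    _ = wj J * (1 - 2⁻¹)⁻¹ := by rw [ENNReal.tsum_mul_left, ENNReal.tsum_geometric]
    _ = 2 * wj J := by
        have : (1 - 2⁻¹ : ℝ≥0∞) = 2⁻¹ := by
          rw [← ENNReal.inv_two_add_inv_two]
          rw [ENNReal.add_sub_cancel_right (by simp)]
        rw [this, inv_inv, mul_comm]

lemma le_tsum_wj (c : ℝ≥0∞) : c ≤ ∑' j : ℤ, if wj j < c then wj j else 0 := by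
  rcases eq_or_ne c 0 with rfl | hc0
  · exact zero_le
  rcases eq_or_ne c ⊤ with rfl | hctop
  · rw [show (∑' j : ℤ, if wj j < ⊤ then wj j else 0) = ∑' j : ℤ, wj j from
      tsum_congr fun j => if_pos (lt_of_le_of_ne le_top (wj_ne_top j))]
    calc (⊤:ℝ≥0∞) = ∑' _ : ℕ, (1:ℝ≥0∞) := (ENNReal.tsum_const_eq_top_of_ne_zero one_ne_zero).symm
      _ ≤ ∑' i : ℕ, wj (i:ℤ) := by
          apply Summable.tsum_le_tsum _ ENNReal.summable ENNReal.summable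
          intro i
          rw [wj, ← ENNReal.ofReal_one]
          exact ENNReal.ofReal_le_ofReal (one_le_zpow₀ (by norm_num) (by positivity))
      _ ≤ ∑' j : ℤ, wj j :=
          Summable.tsum_le_tsum_of_inj (fun i : ℕ => (i:ℤ)) (fun a b h => by simpa using h)
            (fun _ _ => zero_le) (fun _ => le_rfl) ENNReal.summable ENNReal.summable
  · have hpos : 0 < c.toReal := ENNReal.toReal_pos hc0 hctop
    obtain ⟨J, hJ⟩ := exists_mem_Ioc_zpow hpos (by norm_num : (1:ℝ) < 2)
    have hJlt : wj J < c := by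
      rw [wj, ← ENNReal.ofReal_toReal hctop]
      exact ENNReal.ofReal_lt_ofReal_iff_of_nonneg (by positivity) |>.mpr hJ.1
    calc c = ENNReal.ofReal c.toReal := (ENNReal.ofReal_toReal hctop).symm
      _ ≤ ENNReal.ofReal ((2:ℝ)^(J+1)) := ENNReal.ofReal_le_ofReal hJ.2
      _ = 2 * wj J := by
          rw [wj, ← ENNReal.ofReal_ofNat 2, ← ENNReal.ofReal_mul (by norm_num)]
          congr 1
          rw [zpow_add₀ (by norm_num : (2:ℝ) ≠ 0)]
          ring
      _ = ∑' j : ℤ, if j ≤ J then wj j else 0 := (tsum_wj_cut J).symm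
      _ ≤ ∑' j : ℤ, if wj j < c then wj j else 0 := by
          apply Summable.tsum_le_tsum _ ENNReal.summable ENNReal.summable
          intro j
          by_cases hj : j ≤ J
          · rw [if_pos hj, if_pos (lt_of_le_of_lt (wj_mono hj) hJlt)]
          · rw [if_neg hj]; exact zero_le

lemma tsum_wj_le (c : ℝ≥0∞) : (∑' j : ℤ, if wj j < c then wj j else 0) ≤ 4 * c := by
  rcases eq_or_ne c ⊤ with rfl | hctop
  · exact le_top.trans_eq (by rw [ENNReal.mul_top (by norm_num)])
  rcases eq_or_ne c 0 with rfl | hc0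
  · simp
  have hpos : 0 < c.toReal := ENNReal.toReal_pos hc0 hctop
  obtain ⟨J, hJ⟩ := exists_mem_Ioc_zpow hpos (by norm_num : (1:ℝ) < 2)
  have hbd : ∀ j : ℤ, wj j < c → j ≤ J + 1 := by
    intro j hj
    rw [wj, ← ENNReal.ofReal_toReal hctop,
      ENNReal.ofReal_lt_ofReal_iff_of_nonneg (by positivity)] at hj
    by_contra hcon
    push_neg at hcon
    have : (2:ℝ)^(J+1) ≤ 2^j := zpow_le_zpow_right₀ (by norm_num) (by omega)
    linarith [hJ.2]
  calc (∑' j : ℤ, if wj j < c then wj j else 0)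
      ≤ ∑' j : ℤ, if j ≤ J + 1 then wj j else 0 := by
        apply Summable.tsum_le_tsum _ ENNReal.summable ENNReal.summable
        intro j
        by_cases hj : wj j < c
        · rw [if_pos hj, if_pos (hbd j hj)]
        · rw [if_neg hj]; exact zero_le
    _ = 2 * wj (J+1) := tsum_wj_cut (J+1)
    _ ≤ 2 * (2 * c) := by
        apply mul_le_mul_right
        have : wj (J+1) = 2 * wj J := by
          rw [wj, wj, show (2:ℝ)^(J+1) = 2 * 2^J by rw [zpow_add₀ (by norm_num : (2:ℝ) ≠ 0)]; ring,
            ENNReal.ofReal_mul (by norm_num), ENNReal.ofReal_ofNat]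
        rw [this]
        apply mul_le_mul_right
        calc wj J ≤ ENNReal.ofReal c.toReal := ENNReal.ofReal_le_ofReal hJ.1.le
          _ = c := ENNReal.ofReal_toReal hctop
    _ = 4 * c := by ring

/-! ### Key cube estimates -/

lemma setLintegral_ge_const {n : ℕ} {s : Set (Pt n)} (hs : MeasurableSet s)
    {g : Pt n → ℝ≥0∞} {b : ℝ≥0∞} (h : ∀ y ∈ s, b ≤ g y) (ν : Measure (Pt n)) :
    b * ν s ≤ ∫⁻ y in s, g y ∂ν := by
  rw [← setLIntegral_const]
  exact lintegral_mono_ae ((ae_restrict_iff' hs).mpr (ae_of_all _ h))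

lemma le_maxFn0 {n : ℕ} (f : Pt n → ℝ) {c : Fin n → ℝ} {l : ℝ} (hl : 0 < l) {y : Pt n}
    (hy : y ∈ cubeOf n c l) :
    (∫⁻ z in cubeOf n c l, (‖f z‖₊ : ℝ≥0∞)) / volume (cubeOf n c l) ≤ cubeFracMaxFn n 0 f y := by
  refine le_iSup_of_le c (le_iSup_of_le l (le_iSup_of_le hl (le_iSup_of_le hy ?_)))
  rw [Real.rpow_zero, ENNReal.ofReal_one, one_mul]

lemma le_maxMeas {n : ℕ} (α : ℝ) (μ : Measure (Pt n)) {c : Fin n → ℝ} {l : ℝ} (hl : 0 < l)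
    {y : Pt n} (hy : y ∈ cubeOf n c l) :
    ENNReal.ofReal (l ^ α) * μ (cubeOf n c l) / volume (cubeOf n c l) ≤
      cubeFracMaxMeas n α μ y := by
  exact le_iSup_of_le c (le_iSup_of_le l (le_iSup_of_le hl (le_iSup_of_le hy le_rfl)))

/-- the product function on the right-hand side -/
noncomputable def Gfn {n : ℕ} (α : ℝ) (f : Pt n → ℝ) (μ : Measure (Pt n)) (y : Pt n) : ℝ≥0∞ :=
  cubeFracMaxFn n 0 f y * cubeFracMaxMeas n α μ y

lemma cube_key {n : ℕ} (α : ℝ) (f : Pt n → ℝ) (μ : Measure (Pt n)) (c : Fin n → ℝ) {l : ℝ}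
    (hl : 0 < l) :
    (ENNReal.ofReal (l ^ α) * (∫⁻ y in cubeOf n c l, (‖f y‖₊ : ℝ≥0∞)) / volume (cubeOf n c l))
        * μ (cubeOf n c l)
      ≤ ∫⁻ y in cubeOf n c l, Gfn α f μ y := by
  set Q := cubeOf n c l with hQ
  set I := ∫⁻ y in Q, (‖f y‖₊ : ℝ≥0∞) with hI
  set u := I / volume Q with hu
  set v := ENNReal.ofReal (l ^ α) * μ Q / volume Q with hv
  have hb : ∀ y ∈ Q, u * v ≤ Gfn α f μ y := by
    intro y hy
    exact mul_le_mul' (le_maxFn0 f hl hy) (le_maxMeas α μ hl hy)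
  have h1 : u * v * volume Q ≤ ∫⁻ y in Q, Gfn α f μ y := by
    calc u * v * volume Q = (u * v) * volume Q := by ring
    _ ≤ _ := setLintegral_ge_const (measurableSet_cubeOf c l) hb volume
  refine le_trans (le_of_eq ?_) h1
  have hvol0 : volume Q ≠ 0 := volume_cubeOf_ne_zero c hl
  have hvoltop : volume Q ≠ ⊤ := volume_cubeOf_ne_top c hl.le
  have hcancel : v * volume Q = ENNReal.ofReal (l ^ α) * μ Q :=
    ENNReal.div_mul_cancel hvol0 hvoltop
  calc ENNReal.ofReal (l ^ α) * I / volume Q * μ Q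
      = (I / volume Q) * (ENNReal.ofReal (l ^ α) * μ Q) := by
        simp only [div_eq_mul_inv]; ring
    _ = u * (v * volume Q) := by rw [hcancel, hu]
    _ = u * v * volume Q := by ring

lemma aQ_mul_volume {n : ℕ} (α : ℝ) (f : Pt n → ℝ) (t : Fin n → Bool) (k : ℤ)
    (m : Fin n → ℤ) :
    aQ α f t k m * volume (Dc t k m)
      = ENNReal.ofReal (((2:ℝ)^k) ^ α) * ∫⁻ y in Dc t k m, (‖f y‖₊ : ℝ≥0∞) :=
  ENNReal.div_mul_cancel (volume_Dc_ne_zero t k m) (volume_Dc_ne_top t k m)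

lemma Dc_key {n : ℕ} (α : ℝ) (f : Pt n → ℝ) (μ : Measure (Pt n)) (t : Fin n → Bool) (k : ℤ)
    (m : Fin n → ℤ) :
    aQ α f t k m * μ (Dc t k m) ≤ ∫⁻ y in Dc t k m, Gfn α f μ y := by
  have := cube_key α f μ (fun i => 2^k * m i + sh (t i) k) (two_zpow_pos k)
  rw [← Dc_eq_cubeOf] at this
  exact this

/-! ### Maximal cube selection -/

lemma exists_max_cube {n : ℕ} {α : ℝ} {f : Pt n → ℝ} {t : Fin n → Bool} {K j : ℤ} {x : Pt n}
    (hx : x ∈ Om α f t K j) :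
    ∃ k : ℤ, k ≤ K ∧ PP α f t K j k (mIdx t k x) ∧ x ∈ Dc t k (mIdx t k x) := by
  have hx' : wj j < MKf α f t K x := hx
  rw [MKf, lt_iSup_iff] at hx'
  obtain ⟨k₀, hk₀⟩ := hx'
  rw [lt_iSup_iff] at hk₀
  obtain ⟨hk₀K, hk₀a⟩ := hk₀
  obtain ⟨k, ⟨⟨hkK, hka⟩, hkmax⟩⟩ := Int.exists_greatest_of_bdd
    (P := fun k => k ≤ K ∧ wj j < Af α f t k x) ⟨K, fun z hz => hz.1⟩ ⟨k₀, hk₀K, hk₀a⟩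
  refine ⟨k, hkK, ⟨hkK, hka, ?_⟩, self_mem_Dc t k x⟩
  intro k' hkk' hk'K
  by_contra hcon
  push_neg at hcon
  -- the ancestor at scale k' also has large average, contradicting maximality of k
  have hanc : mIdx t k' (corner t k (mIdx t k x)) = mIdx t k' x := by
    have h1 : corner t k (mIdx t k x) ∈ Dc t k (mIdx t k x) := corner_mem_Dc t k _
    have h2 : x ∈ Dc t k (mIdx t k x) := self_mem_Dc t k x
    have := mIdx_nest t hkk'.le (show mIdx t k (corner t k (mIdx t k x)) = mIdx t k x from h1)
    rw [this]
  rw [hanc] at hcon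
  have := hkmax k' ⟨hk'K, hcon⟩
  omega

lemma PP_subset_Om {n : ℕ} {α : ℝ} {f : Pt n → ℝ} {t : Fin n → Bool} {K j k : ℤ}
    {m : Fin n → ℤ} (h : PP α f t K j k m) : Dc t k m ⊆ Om α f t K j :=
  fun y hy => lt_of_lt_of_le h.2.1 (aQ_le_MKf α f t h.1 hy)

lemma mIdx_corner_eq {n : ℕ} {t : Fin n → Bool} {k k' : ℤ} (h : k ≤ k') {m : Fin n → ℤ}
    {y : Pt n} (hy : y ∈ Dc t k m) : mIdx t k' (corner t k m) = mIdx t k' y := by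
  apply mIdx_nest t h
  have h1 : mIdx t k (corner t k m) = m := corner_mem_Dc t k m
  have h2 : mIdx t k y = m := hy
  rw [h1, h2]

lemma PP_disjoint {n : ℕ} {α : ℝ} {f : Pt n → ℝ} {t : Fin n → Bool} {K j : ℤ}
    {k k' : ℤ} {m m' : Fin n → ℤ} (h : PP α f t K j k m) (h' : PP α f t K j k' m')
    (hne : (k, m) ≠ (k', m')) : Disjoint (Dc t k m) (Dc t k' m') := by
  rw [Set.disjoint_left]
  intro y hy hy'
  rcases lt_trichotomy k k' with hlt | heq | hgt
  · have hanc : mIdx t k' (corner t k m) = m' := by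
      rw [mIdx_corner_eq hlt.le hy]; exact hy'
    have := h.2.2 k' hlt h'.1
    rw [hanc] at this
    exact absurd h'.2.1 (not_lt.mpr this)
  · subst heq
    exact hne (by rw [Dc_unique hy hy'])
  · have hanc : mIdx t k (corner t k' m') = m := by
      rw [mIdx_corner_eq hgt.le hy']; exact hy
    have := h'.2.2 k hgt h.1
    rw [hanc] at this
    exact absurd h.2.1 (not_lt.mpr this)

/-! ### Partition of the level sets -/

open scoped Classical in
noncomputable def Fam {n : ℕ} (α : ℝ) (f : Pt n → ℝ) (t : Fin n → Bool) (K j : ℤ)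
    (p : ℤ × (Fin n → ℤ)) : Set (Pt n) :=
  if PP α f t K j p.1 p.2 then Dc t p.1 p.2 else ∅

lemma measurableSet_Fam {n : ℕ} (α : ℝ) (f : Pt n → ℝ) (t : Fin n → Bool) (K j : ℤ)
    (p : ℤ × (Fin n → ℤ)) : MeasurableSet (Fam α f t K j p) := by
  rw [Fam]
  split
  · exact measurableSet_Dc t p.1 p.2
  · exact MeasurableSet.empty

lemma Fam_disjoint {n : ℕ} (α : ℝ) (f : Pt n → ℝ) (t : Fin n → Bool) (K j : ℤ) :
    Pairwise (Function.onFun Disjoint (Fam α f t K j)) := by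
  intro p p' hne
  rw [Function.onFun, Fam, Fam]
  split
  · split
    · exact PP_disjoint (by assumption) (by assumption) (by
        intro hc
        exact hne (Prod.ext (congrArg Prod.fst hc) (congrArg Prod.snd hc)))
    · exact Set.disjoint_empty _
  · exact Set.empty_disjoint _

lemma Om_eq_iUnion {n : ℕ} (α : ℝ) (f : Pt n → ℝ) (t : Fin n → Bool) (K j : ℤ) :
    Om α f t K j = ⋃ p : ℤ × (Fin n → ℤ), Fam α f t K j p := by
  apply Set.Subset.antisymm
  · intro x hx
    obtain ⟨k, hkK, hPP, hmem⟩ := exists_max_cube hx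
    refine Set.mem_iUnion.mpr ⟨(k, mIdx t k x), ?_⟩
    rw [Fam, if_pos hPP]
    exact hmem
  · refine Set.iUnion_subset fun p => ?_
    rw [Fam]
    split
    · exact PP_subset_Om (by assumption)
    · exact Set.empty_subset _

lemma measure_Om {n : ℕ} (α : ℝ) (f : Pt n → ℝ) (t : Fin n → Bool) (K j : ℤ)
    (μ : Measure (Pt n)) :
    μ (Om α f t K j) = ∑' p : ℤ × (Fin n → ℤ), μ (Fam α f t K j p) := by
  rw [Om_eq_iUnion, measure_iUnion (Fam_disjoint α f t K j) (measurableSet_Fam α f t K j)]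

/-! ### Parent bound -/

lemma wj_shift (j : ℤ) (a : ℕ) : wj (j + (a:ℤ)) = 2^a * wj j := by
  rw [wj, wj, zpow_add₀ (by norm_num : (2:ℝ) ≠ 0), zpow_natCast, mul_comm,
    ENNReal.ofReal_mul (by positivity), ENNReal.ofReal_pow (by norm_num),
    ENNReal.ofReal_ofNat]

lemma wj_strict {j j' : ℤ} (h : j < j') : wj j < wj j' := by
  rw [wj, wj]
  exact ENNReal.ofReal_lt_ofReal_iff_of_nonneg (by positivity) |>.mpr
    (zpow_lt_zpow_right₀ (by norm_num) h)

lemma aQ_le_parent {n : ℕ} {α : ℝ} (hα : 0 ≤ α) (f : Pt n → ℝ) (t : Fin n → Bool) (k : ℤ)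
    (m : Fin n → ℤ) :
    aQ α f t k m ≤ (2:ℝ≥0∞)^n * aQ α f t (k+1) (mIdx t (k+1) (corner t k m)) := by
  set m' := mIdx t (k+1) (corner t k m) with hm'
  have hsub : Dc t k m ⊆ Dc t (k+1) m' := Dc_nest (by omega) (corner_mem_Dc t k m)
  have hI : (∫⁻ y in Dc t k m, (‖f y‖₊ : ℝ≥0∞)) ≤ ∫⁻ y in Dc t (k+1) m', (‖f y‖₊ : ℝ≥0∞) :=
    lintegral_mono_set hsub
  have hc : ENNReal.ofReal (((2:ℝ)^k) ^ α) ≤ ENNReal.ofReal (((2:ℝ)^(k+1)) ^ α) :=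
    ENNReal.ofReal_le_ofReal (Real.rpow_le_rpow (two_zpow_pos k).le
      (zpow_le_zpow_right₀ (by norm_num) (by omega)) hα)
  have hvol : volume (Dc t (k+1) m') = 2^n * volume (Dc t k m) := by
    rw [volume_Dc, volume_Dc,
      show (2:ℝ)^(k+1) = 2 * 2^k by rw [zpow_add₀ (by norm_num : (2:ℝ) ≠ 0)]; ring,
      ENNReal.ofReal_mul (by norm_num), ENNReal.ofReal_ofNat, mul_pow]
  calc aQ α f t k m
      ≤ ENNReal.ofReal (((2:ℝ)^(k+1)) ^ α) * (∫⁻ y in Dc t (k+1) m', (‖f y‖₊ : ℝ≥0∞))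
          / volume (Dc t k m) := ENNReal.div_le_div (mul_le_mul' hc hI) le_rfl
    _ = 2^n * (ENNReal.ofReal (((2:ℝ)^(k+1)) ^ α) * ∫⁻ y in Dc t (k+1) m', (‖f y‖₊ : ℝ≥0∞))
          / (2^n * volume (Dc t k m)) := by
        rw [ENNReal.mul_div_mul_left _ _ (by positivity) (by
          exact ENNReal.pow_ne_top (by norm_num))]
    _ = (2:ℝ≥0∞)^n * aQ α f t (k+1) m' := by
        rw [← hvol, aQ, mul_div_assoc]

lemma PP_aQ_le {n : ℕ} {α : ℝ} (hα : 0 ≤ α) {f : Pt n → ℝ} {t : Fin n → Bool} {K j k : ℤ}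
    {m : Fin n → ℤ} (h : PP α f t K j k m) (hk : k < K) :
    aQ α f t k m ≤ (2:ℝ≥0∞)^n * wj j := by
  refine le_trans (aQ_le_parent hα f t k m) (mul_le_mul_right ?_ _)
  exact h.2.2 (k+1) (by omega) (by omega)

/-! ### Volume of the stopping part -/

lemma le_maxFn0_Dc {n : ℕ} (f : Pt n → ℝ) {t : Fin n → Bool} {k : ℤ} {m : Fin n → ℤ}
    {y : Pt n} (hy : y ∈ Dc t k m) :
    (∫⁻ z in Dc t k m, (‖f z‖₊ : ℝ≥0∞)) / volume (Dc t k m) ≤ cubeFracMaxFn n 0 f y := by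
  rw [Dc_eq_cubeOf] at hy ⊢
  exact le_maxFn0 f (two_zpow_pos k) hy

lemma le_maxMeas_Dc {n : ℕ} (α : ℝ) (μ : Measure (Pt n)) {t : Fin n → Bool} {k : ℤ}
    {m : Fin n → ℤ} {y : Pt n} (hy : y ∈ Dc t k m) :
    ENNReal.ofReal (((2:ℝ)^k) ^ α) * μ (Dc t k m) / volume (Dc t k m) ≤
      cubeFracMaxMeas n α μ y := by
  rw [Dc_eq_cubeOf] at hy ⊢
  exact le_maxMeas α μ (two_zpow_pos k) hy

open scoped Classical in
noncomputable def Fam2 {n : ℕ} (α : ℝ) (f : Pt n → ℝ) (t : Fin n → Bool) (K j' k : ℤ)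
    (m : Fin n → ℤ) (p : ℤ × (Fin n → ℤ)) : Set (Pt n) :=
  if PP α f t K j' p.1 p.2 ∧ p.1 ≤ k ∧ Dc t p.1 p.2 ⊆ Dc t k m then Dc t p.1 p.2 else ∅

lemma inter_Om_vol {n : ℕ} {α : ℝ} (hα : 0 ≤ α) {f : Pt n → ℝ} {t : Fin n → Bool}
    {K j k : ℤ} {m : Fin n → ℤ} (h : PP α f t K j k m) (hk : k < K) :
    volume (Dc t k m ∩ Om α f t K (j + (n+2))) ≤ volume (Dc t k m) / 2 := by
  set j' := j + ((n:ℤ)+2) with hj'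
  have hjj' : j < j' := by omega
  -- coverage by strictly smaller stopping cubes
  have hcov : Dc t k m ∩ Om α f t K j' ⊆ ⋃ p, Fam2 α f t K j' k m p := by
    rintro x ⟨hx1, hx2⟩
    obtain ⟨k₁, hk₁K, hPP₁, hmem₁⟩ := exists_max_cube hx2
    have hm : m = mIdx t k x := Dc_unique hx1 (self_mem_Dc t k x)
    have hk₁k : k₁ < k := by
      by_contra hcon
      push_neg at hcon
      rcases eq_or_lt_of_le hcon with heq | hlt
      · -- same scale: cube coincides, contradicts parent bound
        have hPP₁' : PP α f t K j' k (mIdx t k x) := by rw [heq]; exact hPP₁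
        have h1 : wj j' < aQ α f t k m := by
          have := hPP₁'.2.1
          rwa [← hm] at this
        have h2 : aQ α f t k m ≤ (2:ℝ≥0∞)^n * wj j := PP_aQ_le hα h hk
        have h3 : (2:ℝ≥0∞)^n * wj j = wj (j + (n:ℤ)) := by
          rw [show j + (n:ℤ) = j + ((n:ℕ):ℤ) by push_cast; ring, wj_shift]
        have h4 : wj (j + (n:ℤ)) < wj j' := wj_strict (by omega)
        exact absurd (h1.trans_le (h2.trans_eq h3)) (not_lt.mpr h4.le)
      · -- strictly larger: ancestor of our cube, contradicts maximality in h
        have hanc : mIdx t k₁ (corner t k m) = mIdx t k₁ x := mIdx_corner_eq hlt.le hx1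
        have := h.2.2 k₁ hlt hk₁K
        rw [hanc] at this
        exact absurd hPP₁.2.1 (not_lt.mpr (this.trans (wj_mono hjj'.le)))
    have hsubq : Dc t k₁ (mIdx t k₁ x) ⊆ Dc t k m := by
      rw [hm]
      exact Dc_nest hk₁k.le (self_mem_Dc t k₁ x)
    refine Set.mem_iUnion.mpr ⟨(k₁, mIdx t k₁ x), ?_⟩
    rw [Fam2, if_pos ⟨hPP₁, hk₁k.le, hsubq⟩]
    exact hmem₁
  -- per-cube estimate and summation
  have hperp : ∀ p : ℤ × (Fin n → ℤ),
      volume (Fam2 α f t K j' k m p) * wj j'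
        ≤ ENNReal.ofReal (((2:ℝ)^k) ^ α) * ∫⁻ y in Fam2 α f t K j' k m p, (‖f y‖₊ : ℝ≥0∞) := by
    intro p
    rw [Fam2]
    split
    · rename_i hcond
      obtain ⟨hPP₁, hp1k, hsub⟩ := hcond
      have h1 : wj j' * volume (Dc t p.1 p.2) ≤ aQ α f t p.1 p.2 * volume (Dc t p.1 p.2) :=
        mul_le_mul_left hPP₁.2.1.le _
      rw [aQ_mul_volume] at h1
      have h2 : ENNReal.ofReal (((2:ℝ)^p.1) ^ α) ≤ ENNReal.ofReal (((2:ℝ)^k) ^ α) :=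
        ENNReal.ofReal_le_ofReal (Real.rpow_le_rpow (two_zpow_pos p.1).le
          (zpow_le_zpow_right₀ (by norm_num) hp1k) hα)
      calc volume (Dc t p.1 p.2) * wj j' = wj j' * volume (Dc t p.1 p.2) := mul_comm _ _
        _ ≤ ENNReal.ofReal (((2:ℝ)^p.1) ^ α) * ∫⁻ y in Dc t p.1 p.2, (‖f y‖₊ : ℝ≥0∞) := h1
        _ ≤ ENNReal.ofReal (((2:ℝ)^k) ^ α) * ∫⁻ y in Dc t p.1 p.2, (‖f y‖₊ : ℝ≥0∞) :=
            mul_le_mul_left h2 _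
    · simp
  have hdisj : Pairwise (Function.onFun Disjoint (Fam2 α f t K j' k m)) := by
    intro p p' hne
    rw [Function.onFun, Fam2, Fam2]
    split
    · split
      · exact PP_disjoint (by tauto) (by tauto) (by
          intro hc
          exact hne (Prod.ext (congrArg Prod.fst hc) (congrArg Prod.snd hc)))
      · exact Set.disjoint_empty _
    · exact Set.empty_disjoint _
  have hmeas : ∀ p, MeasurableSet (Fam2 α f t K j' k m p) := by
    intro p
    rw [Fam2]
    split
    · exact measurableSet_Dc t p.1 p.2
    · exact MeasurableSet.empty
  have hsub2 : (⋃ p, Fam2 α f t K j' k m p) ⊆ Dc t k m := by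
    refine Set.iUnion_subset fun p => ?_
    rw [Fam2]
    split
    · rename_i hcond; exact hcond.2.2
    · exact Set.empty_subset _
  have key : volume (Dc t k m ∩ Om α f t K j') * wj j'
      ≤ (2:ℝ≥0∞)^n * wj j * volume (Dc t k m) := by
    calc volume (Dc t k m ∩ Om α f t K j') * wj j'
        ≤ volume (⋃ p, Fam2 α f t K j' k m p) * wj j' :=
          mul_le_mul_left (measure_mono hcov) _
      _ ≤ (∑' p, volume (Fam2 α f t K j' k m p)) * wj j' :=
          mul_le_mul_left (measure_iUnion_le _) _
      _ = ∑' p, volume (Fam2 α f t K j' k m p) * wj j' := ENNReal.tsum_mul_right.symm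
      _ ≤ ∑' p, ENNReal.ofReal (((2:ℝ)^k) ^ α) * ∫⁻ y in Fam2 α f t K j' k m p, (‖f y‖₊ : ℝ≥0∞) :=
          Summable.tsum_le_tsum hperp ENNReal.summable ENNReal.summable
      _ = ENNReal.ofReal (((2:ℝ)^k) ^ α) * ∑' p, ∫⁻ y in Fam2 α f t K j' k m p, (‖f y‖₊ : ℝ≥0∞) :=
          ENNReal.tsum_mul_left
      _ = ENNReal.ofReal (((2:ℝ)^k) ^ α) * ∫⁻ y in ⋃ p, Fam2 α f t K j' k m p, (‖f y‖₊ : ℝ≥0∞) := by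
          rw [lintegral_iUnion hmeas hdisj]
      _ ≤ ENNReal.ofReal (((2:ℝ)^k) ^ α) * ∫⁻ y in Dc t k m, (‖f y‖₊ : ℝ≥0∞) :=
          mul_le_mul_right (lintegral_mono_set hsub2) _
      _ = aQ α f t k m * volume (Dc t k m) := (aQ_mul_volume α f t k m).symm
      _ ≤ (2:ℝ≥0∞)^n * wj j * volume (Dc t k m) :=
          mul_le_mul_left (PP_aQ_le hα h hk) _
  -- cancel the weights
  have hwj' : wj j' = (2:ℝ≥0∞)^(n+2) * wj j := by
    rw [hj', show j + ((n:ℤ)+2) = j + (((n+2):ℕ):ℤ) by push_cast; ring, wj_shift]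
  have hc0 : ((2:ℝ≥0∞)^n * wj j) ≠ 0 :=
    mul_ne_zero (by positivity) (wj_ne_zero j)
  have hctop : ((2:ℝ≥0∞)^n * wj j) ≠ ⊤ :=
    ENNReal.mul_ne_top (ENNReal.pow_ne_top (by norm_num)) (wj_ne_top j)
  set A := volume (Dc t k m ∩ Om α f t K j')
  set V := volume (Dc t k m)
  have key2 : A * 4 * ((2:ℝ≥0∞)^n * wj j) ≤ V * ((2:ℝ≥0∞)^n * wj j) := by
    calc A * 4 * ((2:ℝ≥0∞)^n * wj j) = A * ((2:ℝ≥0∞)^(n+2) * wj j) := by ring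
      _ = A * wj j' := by rw [hwj']
      _ ≤ (2:ℝ≥0∞)^n * wj j * V := key
      _ = V * ((2:ℝ≥0∞)^n * wj j) := by ring
  have key3 : A * 4 ≤ V := (ENNReal.mul_le_mul_iff_left hc0 hctop).mp key2
  calc A ≤ V / 4 := (ENNReal.le_div_iff_mul_le (Or.inl (by norm_num)) (Or.inl (by norm_num))).mpr key3
    _ ≤ V / 2 := ENNReal.div_le_div le_rfl (by norm_num)

lemma Ej_vol {n : ℕ} {α : ℝ} (hα : 0 ≤ α) {f : Pt n → ℝ} {t : Fin n → Bool}
    {K j k : ℤ} {m : Fin n → ℤ} (h : PP α f t K j k m) (hk : k < K) :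
    volume (Dc t k m) / 2 ≤ volume (Ej α f t K j k m) := by
  have hEj : Ej α f t K j k m = Dc t k m \ (Dc t k m ∩ Om α f t K (j + (n+2))) := by
    rw [Ej]; exact (Set.diff_self_inter).symm
  rw [hEj, measure_diff Set.inter_subset_left
    ((measurableSet_Dc t k m).inter (measurableSet_Om α f t K _)).nullMeasurableSet
    (ne_top_of_le_ne_top (volume_Dc_ne_top t k m) (measure_mono Set.inter_subset_left))]
  calc volume (Dc t k m) / 2 = volume (Dc t k m) - volume (Dc t k m) / 2 :=
      (ENNReal.sub_half (volume_Dc_ne_top t k m)).symm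
    _ ≤ _ := tsub_le_tsub_left (inter_Om_vol hα h hk) _

lemma L3 {n : ℕ} {α : ℝ} (hα : 0 ≤ α) {f : Pt n → ℝ} (μ : Measure (Pt n)) {t : Fin n → Bool}
    {K j k : ℤ} {m : Fin n → ℤ} (h : PP α f t K j k m) (hk : k < K) :
    wj j * μ (Dc t k m) ≤ 2 * ∫⁻ y in Ej α f t K j k m, Gfn α f μ y := by
  set I := ∫⁻ y in Dc t k m, (‖f y‖₊ : ℝ≥0∞) with hI
  set V := volume (Dc t k m) with hV
  set b := (I / V) * (ENNReal.ofReal (((2:ℝ)^k) ^ α) * μ (Dc t k m) / V) with hb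
  have hEsub : Ej α f t K j k m ⊆ Dc t k m := Set.diff_subset
  have hlow : ∀ y ∈ Ej α f t K j k m, b ≤ Gfn α f μ y := by
    intro y hy
    exact mul_le_mul' (le_maxFn0_Dc f (hEsub hy)) (le_maxMeas_Dc α μ (hEsub hy))
  have h1 : b * volume (Ej α f t K j k m) ≤ ∫⁻ y in Ej α f t K j k m, Gfn α f μ y :=
    setLintegral_ge_const (measurableSet_Ej α f t K j k m) hlow volume
  have h2 : b * (V / 2) ≤ b * volume (Ej α f t K j k m) :=
    mul_le_mul_right (Ej_vol hα h hk) _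
  have h3 : b * (V / 2) = (b * V) / 2 := (mul_div_assoc b V 2).symm
  have h4 : b * V = aQ α f t k m * μ (Dc t k m) := by
    have hcancel : (ENNReal.ofReal (((2:ℝ)^k) ^ α) * μ (Dc t k m) / V) * V
        = ENNReal.ofReal (((2:ℝ)^k) ^ α) * μ (Dc t k m) :=
      ENNReal.div_mul_cancel (volume_Dc_ne_zero t k m) (volume_Dc_ne_top t k m)
    calc b * V = (I / V) * ((ENNReal.ofReal (((2:ℝ)^k) ^ α) * μ (Dc t k m) / V) * V) := by ring
      _ = (I / V) * (ENNReal.ofReal (((2:ℝ)^k) ^ α) * μ (Dc t k m)) := by rw [hcancel]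
      _ = aQ α f t k m * μ (Dc t k m) := by
          rw [aQ, ← hI, ← hV]
          simp only [div_eq_mul_inv]
          ring
  have hbV : b * V ≤ 2 * ((b * V) / 2) := by
    rw [mul_comm (2:ℝ≥0∞) _, ENNReal.div_mul_cancel (by norm_num) (by norm_num)]
  calc wj j * μ (Dc t k m) ≤ aQ α f t k m * μ (Dc t k m) := mul_le_mul_left h.2.1.le _
    _ = b * V := h4.symm
    _ ≤ 2 * ((b * V) / 2) := hbV
    _ = 2 * (b * (V / 2)) := by rw [h3]
    _ ≤ 2 * (b * volume (Ej α f t K j k m)) := mul_le_mul_right h2 2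
    _ ≤ 2 * ∫⁻ y in Ej α f t K j k m, Gfn α f μ y := mul_le_mul_right h1 2

/-! ### Residue class decomposition of ℤ -/

noncomputable def zClassEquiv (N : ℕ) (hN : 0 < N) : ℤ × Fin N ≃ ℤ := by
  refine Equiv.ofBijective (fun p => (N:ℤ) * p.1 + (p.2:ℤ)) ⟨?_, ?_⟩
  · rintro ⟨q, r⟩ ⟨q', r'⟩ hqr
    simp only [Prod.mk.injEq] at hqr ⊢
    have hr : (r:ℤ) < N := by exact_mod_cast r.isLt
    have hr' : (r':ℤ) < N := by exact_mod_cast r'.isLt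
    have hr0 : (0:ℤ) ≤ r := by positivity
    have hr0' : (0:ℤ) ≤ r' := by positivity
    have key : q = q' := by
      rcases lt_trichotomy q q' with hlt | heq | hgt
      · exfalso
        have : (N:ℤ) * (q+1) ≤ N * q' := mul_le_mul_of_nonneg_left (by omega) (by positivity)
        nlinarith
      · exact heq
      · exfalso
        have : (N:ℤ) * (q'+1) ≤ N * q := mul_le_mul_of_nonneg_left (by omega) (by positivity)
        nlinarith
    refine ⟨key, ?_⟩
    rw [key] at hqr
    have : (r:ℤ) = r' := add_left_cancel hqr
    exact Fin.ext (by exact_mod_cast this)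
  · intro j
    have hN' : (0:ℤ) < N := by exact_mod_cast hN
    refine ⟨⟨j / (N:ℤ), ⟨(j % (N:ℤ)).toNat, ?_⟩⟩, ?_⟩
    · have h1 : j % (N:ℤ) < N := Int.emod_lt_of_pos j hN'
      have h2 : 0 ≤ j % (N:ℤ) := Int.emod_nonneg j (by omega)
      omega
    · simp only
      have h2 : 0 ≤ j % (N:ℤ) := Int.emod_nonneg j (by omega)
      rw [Int.toNat_of_nonneg h2]
      exact Int.mul_ediv_add_emod j N

lemma tsum_int_eq_classes (N : ℕ) (hN : 0 < N) (g : ℤ → ℝ≥0∞) :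
    ∑' j : ℤ, g j = ∑ r : Fin N, ∑' q : ℤ, g ((N:ℤ) * q + r) := by
  calc ∑' j : ℤ, g j = ∑' p : ℤ × Fin N, g ((N:ℤ) * p.1 + (p.2:ℤ)) :=
        ((zClassEquiv N hN).tsum_eq g).symm
    _ = ∑' q : ℤ, ∑' r : Fin N, g ((N:ℤ) * q + (r:ℤ)) :=
        ENNReal.tsum_prod (f := fun q (r : Fin N) => g ((N:ℤ) * q + (r:ℤ)))
    _ = ∑' r : Fin N, ∑' q : ℤ, g ((N:ℤ) * q + (r:ℤ)) := ENNReal.tsum_comm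
    _ = ∑ r : Fin N, ∑' q : ℤ, g ((N:ℤ) * q + (r:ℤ)) := tsum_fintype _

/-! ### Bounded overlap -/

lemma Ej_disjoint_of_far {n : ℕ} {α : ℝ} {f : Pt n → ℝ} {t : Fin n → Bool} {K : ℤ}
    {j j' : ℤ} (hjj : j + ((n:ℤ)+2) ≤ j') {p p' : ℤ × (Fin n → ℤ)}
    (h' : PP α f t K j' p'.1 p'.2) :
    Disjoint (Ej α f t K j p.1 p.2) (Ej α f t K j' p'.1 p'.2) := by
  rw [Set.disjoint_left]
  intro y hy hy'
  have h1 : y ∉ Om α f t K (j + ((n:ℤ)+2)) := hy.2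
  have h2 : y ∈ Om α f t K j' := PP_subset_Om h' hy'.1
  exact h1 (Om_anti α f t K hjj h2)

open scoped Classical in
lemma overlap_sum {n : ℕ} (α : ℝ) (f : Pt n → ℝ) (μ : Measure (Pt n)) (t : Fin n → Bool)
    (K : ℤ) :
    (∑' jp : ℤ × (ℤ × (Fin n → ℤ)),
      if PP α f t K jp.1 jp.2.1 jp.2.2 ∧ jp.2.1 < K then
        ∫⁻ y in Ej α f t K jp.1 jp.2.1 jp.2.2, Gfn α f μ y else 0)
      ≤ (n+2 : ℝ≥0∞) * ∫⁻ y, Gfn α f μ y := by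
  set N := n + 2 with hN
  have hN0 : 0 < N := by omega
  rw [ENNReal.tsum_prod (f := fun j (p : ℤ × (Fin n → ℤ)) =>
    if PP α f t K j p.1 p.2 ∧ p.1 < K then
      ∫⁻ y in Ej α f t K j p.1 p.2, Gfn α f μ y else 0)]
  rw [tsum_int_eq_classes N hN0]
  have hclass : ∀ r : Fin N,
      (∑' q : ℤ, ∑' p : ℤ × (Fin n → ℤ),
        if PP α f t K ((N:ℤ) * q + r) p.1 p.2 ∧ p.1 < K then
          ∫⁻ y in Ej α f t K ((N:ℤ) * q + r) p.1 p.2, Gfn α f μ y else 0)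
        ≤ ∫⁻ y, Gfn α f μ y := by
    intro r
    rw [← ENNReal.tsum_prod (f := fun q (p : ℤ × (Fin n → ℤ)) =>
      if PP α f t K ((N:ℤ) * q + r) p.1 p.2 ∧ p.1 < K then
        ∫⁻ y in Ej α f t K ((N:ℤ) * q + r) p.1 p.2, Gfn α f μ y else 0)]
    set S : (ℤ × (ℤ × (Fin n → ℤ))) → Set (Pt n) := fun qp =>
      if PP α f t K ((N:ℤ) * qp.1 + r) qp.2.1 qp.2.2 ∧ qp.2.1 < K then
        Ej α f t K ((N:ℤ) * qp.1 + r) qp.2.1 qp.2.2 else ∅ with hS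
    have hSmeas : ∀ qp, MeasurableSet (S qp) := by
      intro qp
      rw [hS]
      simp only
      split
      · exact measurableSet_Ej α f t K _ _ _
      · exact MeasurableSet.empty
    have hSdisj : Pairwise (Function.onFun Disjoint S) := by
      intro qp qp' hne
      rw [Function.onFun, hS]
      simp only
      split
      · rename_i hc
        split
        · rename_i hc'
          rcases lt_trichotomy qp.1 qp'.1 with hlt | heq | hgt
          · refine Ej_disjoint_of_far ?_ hc'.1
            have hNe : (N:ℤ) = (n:ℤ) + 2 := by rw [hN]; push_cast; ring
            have h2 : (N:ℤ) * (qp.1 + 1) ≤ (N:ℤ) * qp'.1 :=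
              mul_le_mul_of_nonneg_left (by omega) (by positivity)
            nlinarith
          · -- same class element: same j, different cube
            have hj : (N:ℤ) * qp.1 + r = (N:ℤ) * qp'.1 + r := by rw [heq]
            have hp : qp.2 ≠ qp'.2 := by
              intro hc2
              exact hne (Prod.ext heq hc2)
            have hDdis : Disjoint (Dc t qp.2.1 qp.2.2) (Dc t qp'.2.1 qp'.2.2) := by
              refine PP_disjoint hc.1 (hj ▸ hc'.1) ?_
              intro hc3
              exact hp (Prod.ext (congrArg Prod.fst hc3) (congrArg Prod.snd hc3))
            exact hDdis.mono Set.diff_subset Set.diff_subset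
          · refine (Ej_disjoint_of_far ?_ hc.1).symm
            have hNe : (N:ℤ) = (n:ℤ) + 2 := by rw [hN]; push_cast; ring
            have h2 : (N:ℤ) * (qp'.1 + 1) ≤ (N:ℤ) * qp.1 :=
              mul_le_mul_of_nonneg_left (by omega) (by positivity)
            nlinarith
        · exact Set.disjoint_empty _
      · exact Set.empty_disjoint _
    calc (∑' qp : ℤ × (ℤ × (Fin n → ℤ)),
        if PP α f t K ((N:ℤ) * qp.1 + r) qp.2.1 qp.2.2 ∧ qp.2.1 < K then
          ∫⁻ y in Ej α f t K ((N:ℤ) * qp.1 + r) qp.2.1 qp.2.2, Gfn α f μ y else 0)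
        = ∑' qp, ∫⁻ y in S qp, Gfn α f μ y := by
          apply tsum_congr
          intro qp
          rw [hS]
          simp only
          split
          · rfl
          · simp
      _ = ∫⁻ y in ⋃ qp, S qp, Gfn α f μ y := (lintegral_iUnion hSmeas hSdisj _).symm
      _ ≤ ∫⁻ y, Gfn α f μ y := setLIntegral_le_lintegral _ _
  calc (∑ r : Fin N, ∑' q : ℤ, ∑' p : ℤ × (Fin n → ℤ),
      if PP α f t K ((N:ℤ) * q + r) p.1 p.2 ∧ p.1 < K then
        ∫⁻ y in Ej α f t K ((N:ℤ) * q + r) p.1 p.2, Gfn α f μ y else 0)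
      ≤ ∑ _r : Fin N, ∫⁻ y, Gfn α f μ y := Finset.sum_le_sum fun r _ => hclass r
    _ = (N:ℝ≥0∞) * ∫⁻ y, Gfn α f μ y := by
        rw [Finset.sum_const, Finset.card_univ, Fintype.card_fin, nsmul_eq_mul]
    _ = (n+2 : ℝ≥0∞) * ∫⁻ y, Gfn α f μ y := by
        rw [hN]; push_cast; ring

/-! ### Main estimate for a fixed truncated grid -/

open scoped Classical in
lemma grid_est {n : ℕ} {α : ℝ} (hα : 0 ≤ α) (f : Pt n → ℝ) (μ : Measure (Pt n))
    (t : Fin n → Bool) (K : ℤ) :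
    ∫⁻ x, MKf α f t K x ∂μ ≤ (2*(n:ℝ≥0∞) + 8) * ∫⁻ y, Gfn α f μ y := by
  set G := ∫⁻ y, Gfn α f μ y with hG
  have hpt : ∀ x, MKf α f t K x ≤ ∑' j : ℤ, (Om α f t K j).indicator (fun _ => wj j) x := by
    intro x
    refine le_trans (le_tsum_wj (MKf α f t K x)) (le_of_eq (tsum_congr fun j => ?_))
    by_cases hj : x ∈ Om α f t K j
    · rw [if_pos (show wj j < MKf α f t K x from hj), Set.indicator_of_mem hj]
    · rw [if_neg (show ¬ wj j < MKf α f t K x from hj), Set.indicator_of_notMem hj]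
  have h2 : ∫⁻ x, MKf α f t K x ∂μ ≤ ∑' j : ℤ, wj j * μ (Om α f t K j) := by
    calc ∫⁻ x, MKf α f t K x ∂μ
        ≤ ∫⁻ x, ∑' j : ℤ, (Om α f t K j).indicator (fun _ => wj j) x ∂μ := lintegral_mono hpt
      _ = ∑' j : ℤ, ∫⁻ x, (Om α f t K j).indicator (fun _ => wj j) x ∂μ :=
          lintegral_tsum fun j =>
            (measurable_const.indicator (measurableSet_Om α f t K j)).aemeasurable
      _ = ∑' j : ℤ, wj j * μ (Om α f t K j) := by
          refine tsum_congr fun j => ?_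
          rw [lintegral_indicator (measurableSet_Om α f t K j), setLIntegral_const]
  set Ttop := ∑' j : ℤ, ∑' p : ℤ × (Fin n → ℤ),
    (if PP α f t K j p.1 p.2 ∧ p.1 = K then wj j * μ (Dc t p.1 p.2) else 0) with hTtop
  set Tlow := ∑' j : ℤ, ∑' p : ℤ × (Fin n → ℤ),
    (if PP α f t K j p.1 p.2 ∧ p.1 < K then wj j * μ (Dc t p.1 p.2) else 0) with hTlow
  have h5 : (∑' j : ℤ, wj j * μ (Om α f t K j)) ≤ Ttop + Tlow := by
    have h3 : ∀ j : ℤ, wj j * μ (Om α f t K j)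
        = ∑' p : ℤ × (Fin n → ℤ), wj j * μ (Fam α f t K j p) := by
      intro j; rw [measure_Om, ENNReal.tsum_mul_left]
    calc (∑' j : ℤ, wj j * μ (Om α f t K j))
        = ∑' j : ℤ, ∑' p : ℤ × (Fin n → ℤ), wj j * μ (Fam α f t K j p) := tsum_congr h3
      _ ≤ ∑' j : ℤ, ((∑' p : ℤ × (Fin n → ℤ),
            (if PP α f t K j p.1 p.2 ∧ p.1 = K then wj j * μ (Dc t p.1 p.2) else 0))
          + ∑' p : ℤ × (Fin n → ℤ),
            (if PP α f t K j p.1 p.2 ∧ p.1 < K then wj j * μ (Dc t p.1 p.2) else 0)) := by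
          apply Summable.tsum_le_tsum _ ENNReal.summable ENNReal.summable
          intro j
          rw [← ENNReal.tsum_add]
          apply Summable.tsum_le_tsum _ ENNReal.summable ENNReal.summable
          intro p
          rw [Fam]
          split
          · rename_i hPPp
            rcases eq_or_lt_of_le hPPp.1 with heq | hlt
            · rw [if_pos (show PP α f t K j p.1 p.2 ∧ p.1 = K from ⟨hPPp, heq⟩)]
              exact le_self_add
            · rw [if_pos (show PP α f t K j p.1 p.2 ∧ p.1 < K from ⟨hPPp, hlt⟩)]
              exact le_add_self
          · simp
      _ = Ttop + Tlow := ENNReal.tsum_add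
  have htop : Ttop ≤ 4 * G := by
    have hstep : ∀ j : ℤ, (∑' p : ℤ × (Fin n → ℤ),
        (if PP α f t K j p.1 p.2 ∧ p.1 = K then wj j * μ (Dc t p.1 p.2) else 0))
        ≤ ∑' mm : Fin n → ℤ, (if wj j < aQ α f t K mm then wj j else 0) * μ (Dc t K mm) := by
      intro j
      have hinj : Function.Injective (fun mm : Fin n → ℤ => ((K, mm) : ℤ × (Fin n → ℤ))) := by
        intro a b h
        simpa using h
      have hcollapse : (∑' p : ℤ × (Fin n → ℤ),
          (if p.1 = K then (if wj j < aQ α f t K p.2 then wj j else 0) * μ (Dc t K p.2) else 0))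
          = ∑' mm : Fin n → ℤ, (if wj j < aQ α f t K mm then wj j else 0) * μ (Dc t K mm) := by
        rw [← hinj.tsum_eq (f := fun p : ℤ × (Fin n → ℤ) =>
          if p.1 = K then (if wj j < aQ α f t K p.2 then wj j else 0) * μ (Dc t K p.2) else 0)]
        · exact tsum_congr fun mm => by simp
        · intro p hp
          rcases p with ⟨k, mm⟩
          by_cases hk : k = K
          · subst hk; exact ⟨mm, rfl⟩
          · exact absurd (by simp [hk]) (Function.mem_support.mp hp)
      rw [← hcollapse]
      apply Summable.tsum_le_tsum _ ENNReal.summable ENNReal.summable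
      rintro ⟨k, mm⟩
      by_cases hc : PP α f t K j k mm ∧ k = K
      · obtain ⟨hPPp, hkK⟩ := hc
        subst hkK
        rw [if_pos ⟨hPPp, rfl⟩, if_pos rfl, if_pos hPPp.2.1]
      · rw [if_neg hc]
        exact zero_le
    have hDdisj : Pairwise (Function.onFun Disjoint (fun mm : Fin n → ℤ => Dc t K mm)) := by
      intro mm mm' hne
      rw [Function.onFun, Set.disjoint_left]
      intro y hy hy'
      exact hne (Dc_unique hy hy')
    calc Ttop ≤ ∑' j : ℤ, ∑' mm : Fin n → ℤ,
          (if wj j < aQ α f t K mm then wj j else 0) * μ (Dc t K mm) :=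
        Summable.tsum_le_tsum hstep ENNReal.summable ENNReal.summable
      _ = ∑' mm : Fin n → ℤ, ∑' j : ℤ,
          (if wj j < aQ α f t K mm then wj j else 0) * μ (Dc t K mm) := ENNReal.tsum_comm
      _ ≤ ∑' mm : Fin n → ℤ, 4 * (aQ α f t K mm * μ (Dc t K mm)) := by
          apply Summable.tsum_le_tsum _ ENNReal.summable ENNReal.summable
          intro mm
          rw [ENNReal.tsum_mul_right, ← mul_assoc]
          exact mul_le_mul_left (tsum_wj_le _) _
      _ ≤ ∑' mm : Fin n → ℤ, 4 * ∫⁻ y in Dc t K mm, Gfn α f μ y := by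
          apply Summable.tsum_le_tsum _ ENNReal.summable ENNReal.summable
          intro mm
          exact mul_le_mul_right (Dc_key α f μ t K mm) _
      _ = 4 * ∫⁻ y in ⋃ mm : Fin n → ℤ, Dc t K mm, Gfn α f μ y := by
          rw [lintegral_iUnion (fun mm => measurableSet_Dc t K mm) hDdisj,
            ENNReal.tsum_mul_left]
      _ ≤ 4 * G := mul_le_mul_right (setLIntegral_le_lintegral _ _) _
  have hlow : Tlow ≤ 2 * (((n:ℝ≥0∞)+2) * G) := by
    calc Tlow = ∑' jp : ℤ × (ℤ × (Fin n → ℤ)),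
          (if PP α f t K jp.1 jp.2.1 jp.2.2 ∧ jp.2.1 < K then
            wj jp.1 * μ (Dc t jp.2.1 jp.2.2) else 0) :=
        (ENNReal.tsum_prod (f := fun j (p : ℤ × (Fin n → ℤ)) =>
          if PP α f t K j p.1 p.2 ∧ p.1 < K then wj j * μ (Dc t p.1 p.2) else 0)).symm
      _ ≤ ∑' jp : ℤ × (ℤ × (Fin n → ℤ)),
          2 * (if PP α f t K jp.1 jp.2.1 jp.2.2 ∧ jp.2.1 < K then
            ∫⁻ y in Ej α f t K jp.1 jp.2.1 jp.2.2, Gfn α f μ y else 0) := by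
          apply Summable.tsum_le_tsum _ ENNReal.summable ENNReal.summable
          intro jp
          split
          · rename_i hc
            exact L3 hα μ hc.1 hc.2
          · simp
      _ = 2 * ∑' jp : ℤ × (ℤ × (Fin n → ℤ)),
          (if PP α f t K jp.1 jp.2.1 jp.2.2 ∧ jp.2.1 < K then
            ∫⁻ y in Ej α f t K jp.1 jp.2.1 jp.2.2, Gfn α f μ y else 0) := ENNReal.tsum_mul_left
      _ ≤ 2 * (((n:ℝ≥0∞)+2) * G) := mul_le_mul_right (overlap_sum α f μ t K) _
  calc ∫⁻ x, MKf α f t K x ∂μ ≤ Ttop + Tlow := h2.trans h5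
    _ ≤ 4 * G + 2 * (((n:ℝ≥0∞)+2) * G) := add_le_add htop hlow
    _ = (2*(n:ℝ≥0∞) + 8) * G := by ring

/-! ### Full dyadic maximal function and assembly -/

noncomputable def Mfull {n : ℕ} (α : ℝ) (f : Pt n → ℝ) (t : Fin n → Bool) (x : Pt n) : ℝ≥0∞ :=
  ⨆ k : ℤ, Af α f t k x

lemma measurable_Mfull {n : ℕ} (α : ℝ) (f : Pt n → ℝ) (t : Fin n → Bool) :
    Measurable (Mfull α f t) :=
  Measurable.iSup fun k => measurable_Af α f t k

lemma maxFn_le_sum {n : ℕ} {α : ℝ} (hα : 0 ≤ α) (f : Pt n → ℝ) (x : Pt n) :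
    cubeFracMaxFn n α f x ≤
      (ENNReal.ofReal 6)^n * ∑ t : Fin n → Bool, Mfull α f t x := by
  rw [cubeFracMaxFn]
  refine iSup_le fun c => iSup_le fun l => iSup_le fun hl => iSup_le fun hx => ?_
  obtain ⟨t, k, h3, h6, hsub⟩ := cover hl hx
  set R := Dc t k (mIdx t k x) with hR
  have hcl : ENNReal.ofReal (l ^ α) ≤ ENNReal.ofReal (((2:ℝ)^k) ^ α) :=
    ENNReal.ofReal_le_ofReal (Real.rpow_le_rpow hl.le (by nlinarith) hα)
  have hI : (∫⁻ y in cubeOf n c l, (‖f y‖₊ : ℝ≥0∞)) ≤ ∫⁻ y in R, (‖f y‖₊ : ℝ≥0∞) :=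
    lintegral_mono_set hsub
  have hvol : volume R ≤ (ENNReal.ofReal 6)^n * volume (cubeOf n c l) := by
    rw [hR, volume_Dc, volume_cubeOf c hl.le, ← mul_pow, ← ENNReal.ofReal_mul (by norm_num)]
    exact pow_le_pow_left' (ENNReal.ofReal_le_ofReal h6) n
  have h60 : ((ENNReal.ofReal 6)^n : ℝ≥0∞) ≠ 0 := by
    apply pow_ne_zero
    simp only [ne_eq, ENNReal.ofReal_eq_zero, not_le]
    norm_num
  have h6top : ((ENNReal.ofReal 6)^n : ℝ≥0∞) ≠ ⊤ := ENNReal.pow_ne_top ENNReal.ofReal_ne_top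
  calc ENNReal.ofReal (l ^ α) * (∫⁻ y in cubeOf n c l, (‖f y‖₊ : ℝ≥0∞)) / volume (cubeOf n c l)
      ≤ ENNReal.ofReal (((2:ℝ)^k) ^ α) * (∫⁻ y in R, (‖f y‖₊ : ℝ≥0∞)) / volume (cubeOf n c l) :=
        ENNReal.div_le_div (mul_le_mul' hcl hI) le_rfl
    _ = (ENNReal.ofReal 6)^n * (ENNReal.ofReal (((2:ℝ)^k) ^ α) * ∫⁻ y in R, (‖f y‖₊ : ℝ≥0∞))
          / ((ENNReal.ofReal 6)^n * volume (cubeOf n c l)) := by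
        rw [ENNReal.mul_div_mul_left _ _ h60 h6top]
    _ ≤ (ENNReal.ofReal 6)^n * (ENNReal.ofReal (((2:ℝ)^k) ^ α) * ∫⁻ y in R, (‖f y‖₊ : ℝ≥0∞))
          / volume R := ENNReal.div_le_div le_rfl hvol
    _ = (ENNReal.ofReal 6)^n * aQ α f t k (mIdx t k x) := by
        rw [aQ, mul_div_assoc, hR]
    _ ≤ (ENNReal.ofReal 6)^n * Mfull α f t x :=
        mul_le_mul_right (le_iSup (fun k' => Af α f t k' x) k) _
    _ ≤ (ENNReal.ofReal 6)^n * ∑ t' : Fin n → Bool, Mfull α f t' x :=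
        mul_le_mul_right (Finset.single_le_sum (f := fun t' => Mfull α f t' x)
          (fun _ _ => zero_le) (Finset.mem_univ t)) _

lemma Mfull_eq_iSup {n : ℕ} (α : ℝ) (f : Pt n → ℝ) (t : Fin n → Bool) (x : Pt n) :
    Mfull α f t x = ⨆ K : ℕ, MKf α f t (K:ℤ) x := by
  apply le_antisymm
  · refine iSup_le fun k => ?_
    refine le_trans (Af_le_MKf α f t (Int.self_le_toNat k) x)
      (le_iSup (fun K : ℕ => MKf α f t (K:ℤ) x) k.toNat)
  · refine iSup_le fun K => ?_
    refine iSup_le fun k => iSup_le fun _ => le_iSup (fun k' => Af α f t k' x) k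

lemma MKf_mono {n : ℕ} (α : ℝ) (f : Pt n → ℝ) (t : Fin n → Bool) {K K' : ℤ} (h : K ≤ K')
    (x : Pt n) : MKf α f t K x ≤ MKf α f t K' x :=
  iSup_le fun k => iSup_le fun hk => Af_le_MKf α f t (hk.trans h) x

lemma lintegral_Mfull_le {n : ℕ} {α : ℝ} (hα : 0 ≤ α) (f : Pt n → ℝ) (μ : Measure (Pt n))
    (t : Fin n → Bool) :
    ∫⁻ x, Mfull α f t x ∂μ ≤ (2*(n:ℝ≥0∞) + 8) * ∫⁻ y, Gfn α f μ y := by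
  have heq : ∫⁻ x, Mfull α f t x ∂μ = ⨆ K : ℕ, ∫⁻ x, MKf α f t (K:ℤ) x ∂μ := by
    rw [show (fun x => Mfull α f t x) = fun x => ⨆ K : ℕ, MKf α f t (K:ℤ) x from
      funext fun x => Mfull_eq_iSup α f t x]
    exact lintegral_iSup' (fun K => (measurable_MKf α f t K).aemeasurable)
      (ae_of_all _ fun x K K' hKK => MKf_mono α f t (by exact_mod_cast hKK) x)
  rw [heq]
  exact iSup_le fun K => grid_est hα f μ t K

end FracMaxAux

open FracMaxAux

/-- Endpoint estimate `∫ M_α f dμ ≤ C ∫ Mf · M_α μ dx`. -/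
theorem lintegral_fracMax_le (n : ℕ) (α : ℝ) (hα : 0 ≤ α) (hαn : α < n) :
    ∃ C : ℝ≥0∞, 0 < C ∧ C ≠ ⊤ ∧
      ∀ (μ : Measure (EuclideanSpace ℝ (Fin n))) [IsLocallyFiniteMeasure μ]
        (f : EuclideanSpace ℝ (Fin n) → ℝ), LocallyIntegrable f volume →
        ∫⁻ x, cubeFracMaxFn n α f x ∂μ ≤
          C * ∫⁻ x, cubeFracMaxFn n 0 f x * cubeFracMaxMeas n α μ x := by

  refine ⟨(ENNReal.ofReal 6)^n * (2^n * (2*(n:ℝ≥0∞) + 8)), ?_, ?_, ?_⟩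
  · apply ENNReal.mul_pos
    · apply pow_ne_zero
      simp only [ne_eq, ENNReal.ofReal_eq_zero, not_le]
      norm_num
    · apply mul_ne_zero
      · positivity
      · intro hc
        have : (8:ℝ≥0∞) ≤ 2*(n:ℝ≥0∞) + 8 := le_add_self
        rw [hc] at this
        exact absurd this (by norm_num)
  · apply ENNReal.mul_ne_top (ENNReal.pow_ne_top ENNReal.ofReal_ne_top)
    apply ENNReal.mul_ne_top (ENNReal.pow_ne_top (by norm_num))
    apply ENNReal.add_ne_top.mpr
    constructor
    · exact ENNReal.mul_ne_top (by norm_num) (ENNReal.natCast_ne_top n)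
    · norm_num
  · intro μ _ f hf
    have h60 : ((ENNReal.ofReal 6)^n : ℝ≥0∞) ≠ ⊤ := ENNReal.pow_ne_top ENNReal.ofReal_ne_top
    have hGmatch : (∫⁻ x, cubeFracMaxFn n 0 f x * cubeFracMaxMeas n α μ x)
        = ∫⁻ y, Gfn α f μ y := rfl
    calc ∫⁻ x, cubeFracMaxFn n α f x ∂μ
        ≤ ∫⁻ x, (ENNReal.ofReal 6)^n * ∑ t : Fin n → Bool, Mfull α f t x ∂μ :=
          lintegral_mono (maxFn_le_sum hα f)
      _ = (ENNReal.ofReal 6)^n * ∫⁻ x, ∑ t : Fin n → Bool, Mfull α f t x ∂μ :=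
          lintegral_const_mul' _ _ h60
      _ = (ENNReal.ofReal 6)^n * ∑ t : Fin n → Bool, ∫⁻ x, Mfull α f t x ∂μ := by
          rw [lintegral_finset_sum _ (fun t _ => measurable_Mfull α f t)]
      _ ≤ (ENNReal.ofReal 6)^n * ∑ _t : Fin n → Bool,
            (2*(n:ℝ≥0∞) + 8) * ∫⁻ y, Gfn α f μ y :=
          mul_le_mul_right (Finset.sum_le_sum fun t _ => lintegral_Mfull_le hα f μ t) _
      _ = (ENNReal.ofReal 6)^n * (2^n * ((2*(n:ℝ≥0∞) + 8) * ∫⁻ y, Gfn α f μ y)) := by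
          rw [Finset.sum_const, Finset.card_univ, nsmul_eq_mul]
          congr 2
          rw [show Fintype.card (Fin n → Bool) = 2^n by
            rw [Fintype.card_fun, Fintype.card_bool, Fintype.card_fin]]
          push_cast
          ring
      _ = (ENNReal.ofReal 6)^n * (2^n * (2*(n:ℝ≥0∞) + 8)) *
            ∫⁻ x, cubeFracMaxFn n 0 f x * cubeFracMaxMeas n α μ x := by
          rw [hGmatch]; ring
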